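/- Let ζ ∈ ℂ, ζ ≠ 0, let q₊(z) = ∏_{m=1}^{N}(z − w_m) be a polynomial over ℂ with pairwise distinct roots, and let Λ be a polynomial with Λ(w_ℓ) ≠ 0 for all ℓ. If the Bethe equations 2ζ + Λ′(w_ℓ)/Λ(w_ℓ) = ∑_{m ≠ ℓ} 2/(w_ℓ − w_m) hold for every ℓ, then there exists a polynomial q₋ over ℂ satisfying q₋′q₊ − q₋q₊′ + 2ζ q₋q₊ = Λ. -/

import Mathlib

open Polynomial Finset

private lemma qq_deriv_finset_prod {ι : Type*} [DecidableEq ι] (s : Finset ι) (f : ι → Polynomial ℂ) :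
    derivative (∏ i ∈ s, f i) = ∑ i ∈ s, (∏ j ∈ s.erase i, f j) * derivative (f i) := by
  induction s using Finset.induction with
  | empty => simp
  | insert a s ha ih =>
    rw [Finset.prod_insert ha, derivative_mul, ih, Finset.sum_insert ha,
      Finset.erase_insert ha, Finset.mul_sum]
    congr 1
    · exact mul_comm _ _
    · refine Finset.sum_congr rfl fun i hi => ?_
      rw [Finset.erase_insert_of_ne (by rintro rfl; exact ha hi), Finset.prod_insert
        (fun h => ha (Finset.mem_of_mem_erase h))]
      ring

private lemma qq_solve_ode (c : ℂ) (hc : c ≠ 0) :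
    ∀ n (S : Polynomial ℂ), S.natDegree ≤ n → ∃ t, derivative t + C c * t = S := by
  intro n
  induction n with
  | zero =>
    intro S hS
    obtain ⟨a, rfl⟩ := Polynomial.natDegree_eq_zero.mp (Nat.le_zero.mp hS)
    refine ⟨C (c⁻¹ * a), ?_⟩
    rw [derivative_C, ← C_mul, zero_add]
    congr 1
    field_simp
  | succ n ih =>
    intro S hS
    obtain ⟨t₁, ht₁⟩ := ih (C c⁻¹ * derivative S)
      (le_trans (natDegree_C_mul_le _ _)
        (le_trans (natDegree_derivative_le S) (by omega)))
    refine ⟨C c⁻¹ * S - t₁, ?_⟩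
    have hcc : C c * C c⁻¹ = 1 := by rw [← C_mul, mul_inv_cancel₀ hc, C_1]
    rw [derivative_sub, derivative_mul, derivative_C]
    linear_combination (-1 : Polynomial ℂ) * ht₁ + S * hcc

/-- Converse direction: the Bethe equations imply the existence of a polynomial
`qm` solving the sl(2) qq-system. -/
theorem sl2_bethe_implies_qq (ζ : ℂ) (hζ : ζ ≠ 0) (N : ℕ) (w : Fin N → ℂ)
    (hw : Function.Injective w) (qp : Polynomial ℂ)
    (hq : qp = ∏ m : Fin N, (X - C (w m))) (Λ : Polynomial ℂ)
    (hΛ : ∀ ℓ : Fin N, Λ.eval (w ℓ) ≠ 0)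
    (hbethe : ∀ ℓ : Fin N,
      2 * ζ + (derivative Λ).eval (w ℓ) / Λ.eval (w ℓ)
        = ∑ m ∈ Finset.univ.erase ℓ, 2 / (w ℓ - w m)) :
    ∃ qm : Polynomial ℂ,
      derivative qm * qp - qm * derivative qp + C (2 * ζ) * (qm * qp) = Λ := by
  classical
  set p₀ : Polynomial ℂ := Lagrange.interpolate Finset.univ w
    (fun m => - Λ.eval (w m) / (∏ k ∈ Finset.univ.erase m, (w m - w k))) with hp₀def
  have hinj : Set.InjOn w ↑(Finset.univ : Finset (Fin N)) := Function.Injective.injOn hw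
  have hp₀ : ∀ ℓ, p₀.eval (w ℓ)
      = - Λ.eval (w ℓ) / (∏ k ∈ Finset.univ.erase ℓ, (w ℓ - w k)) :=
    fun ℓ => Lagrange.eval_interpolate_at_node _ hinj (Finset.mem_univ ℓ)
  have hsub : ∀ ℓ m : Fin N, m ≠ ℓ → w ℓ - w m ≠ 0 :=
    fun ℓ m h => sub_ne_zero.mpr fun he => h (hw he.symm)
  have hr0 : ∀ ℓ, (∏ k ∈ Finset.univ.erase ℓ, (w ℓ - w k)) ≠ 0 := fun ℓ =>
    Finset.prod_ne_zero_iff.mpr fun k hk => hsub ℓ k (Finset.ne_of_mem_erase hk)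
  set F : Polynomial ℂ :=
    Λ - (derivative p₀ * qp - p₀ * derivative qp + C (2*ζ) * (p₀ * qp)) with hFdef
  have key : ∀ ℓ : Fin N, (X - C (w ℓ))^2 ∣ F := by
    intro ℓ
    set r : Polynomial ℂ := ∏ k ∈ Finset.univ.erase ℓ, (X - C (w k)) with hrdef
    have hqpr : qp = (X - C (w ℓ)) * r := by
      rw [hq, hrdef]
      exact (Finset.mul_prod_erase _ _ (Finset.mem_univ ℓ)).symm
    have hrev : r.eval (w ℓ) = ∏ k ∈ Finset.univ.erase ℓ, (w ℓ - w k) := by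
      simp [hrdef, eval_prod]
    have hqp0 : qp.eval (w ℓ) = 0 := by simp [hqpr]
    have hdqp : derivative qp = r + (X - C (w ℓ)) * derivative r := by
      rw [hqpr, derivative_mul, derivative_X_sub_C, one_mul]
    have hdqpev : (derivative qp).eval (w ℓ) = r.eval (w ℓ) := by simp [hdqp]
    have hddqpev : (derivative (derivative qp)).eval (w ℓ)
        = 2 * (derivative r).eval (w ℓ) := by
      rw [hdqp, derivative_add, derivative_mul, derivative_X_sub_C, one_mul]
      simp
      ring
    have hdrev : 2 * (derivative r).eval (w ℓ)
        = r.eval (w ℓ) * (∑ m ∈ Finset.univ.erase ℓ, 2 / (w ℓ - w m)) := by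
      rw [hrdef, qq_deriv_finset_prod]
      rw [eval_finset_sum]
      rw [Finset.mul_sum, Finset.mul_sum]
      refine Finset.sum_congr rfl fun m hm => ?_
      rw [eval_mul, derivative_X_sub_C, eval_one, mul_one, eval_prod]
      simp only [eval_sub, eval_X, eval_C]
      rw [hrev, ← Finset.mul_prod_erase _ (fun k => w ℓ - w k) hm]
      have h1 : w ℓ - w m ≠ 0 := hsub ℓ m (Finset.ne_of_mem_erase hm)
      field_simp
    -- root of F
    have hF0 : F.eval (w ℓ) = 0 := by
      simp only [hFdef, eval_sub, eval_add, eval_mul, eval_C, hqp0, hdqpev, hrev,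
        mul_zero, zero_mul]
      rw [hp₀ ℓ]
      field_simp
      rw [mul_div_assoc, div_self (hr0 ℓ), mul_one]
      ring
    -- derivative of F
    have hdF : derivative F = derivative Λ - (derivative (derivative p₀) * qp
        - p₀ * derivative (derivative qp)
        + C (2*ζ) * (derivative p₀ * qp + p₀ * derivative qp)) := by
      rw [hFdef]
      simp only [derivative_sub, derivative_add, derivative_mul, derivative_C]
      ring
    have hF1 : (derivative F).eval (w ℓ) = 0 := by
      rw [hdF]
      simp only [eval_sub, eval_add, eval_mul, eval_C, hqp0, hdqpev, hddqpev, hrev,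
        mul_zero, zero_mul]
      rw [hp₀ ℓ]
      have hb := hbethe ℓ
      have hL := hΛ ℓ
      have hr := hr0 ℓ
      set Rℓ := ∏ k ∈ Finset.univ.erase ℓ, (w ℓ - w k)
      have hdr2 : 2 * (derivative r).eval (w ℓ)
          = Rℓ * (∑ m ∈ Finset.univ.erase ℓ, 2 / (w ℓ - w m)) := by
        rw [hdrev, hrev]
      set Sg := ∑ m ∈ Finset.univ.erase ℓ, 2 / (w ℓ - w m)
      -- hb : 2ζ + Λ'/Λ = Sg
      have hb' : (derivative Λ).eval (w ℓ)
          = Λ.eval (w ℓ) * Sg - 2 * ζ * Λ.eval (w ℓ) := by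
        field_simp at hb
        linear_combination hb
      field_simp
      linear_combination (-(Λ.eval (w ℓ))) * hdr2 + Rℓ * hb'
    -- double root gives square divisibility
    obtain ⟨G, hG⟩ := (Polynomial.dvd_iff_isRoot).mpr hF0
    have hGroot : G.eval (w ℓ) = 0 := by
      have := hF1
      rw [hG, derivative_mul, derivative_X_sub_C, one_mul] at this
      simpa using this
    obtain ⟨H, hH⟩ := (Polynomial.dvd_iff_isRoot).mpr hGroot
    exact ⟨H, by rw [hG, hH]; ring⟩
  have hdvd : qp^2 ∣ F := by
    rw [hq, ← Finset.prod_pow]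
    exact Finset.prod_dvd_of_coprime
      (fun i _ j _ hij => ((Polynomial.pairwise_coprime_X_sub_C hw) hij).pow)
      (fun i _ => key i)
  obtain ⟨S, hS⟩ := hdvd
  obtain ⟨t, ht⟩ := qq_solve_ode (2*ζ) (mul_ne_zero two_ne_zero hζ) S.natDegree S le_rfl
  refine ⟨p₀ + qp * t, ?_⟩
  have hFeq : Λ = (derivative p₀ * qp - p₀ * derivative qp + C (2*ζ) * (p₀ * qp))
      + qp^2 * S := by
    rw [← hS, hFdef]; ring
  rw [derivative_add, derivative_mul]
  linear_combination (-1 : Polynomial ℂ) * hFeq + qp^2 * ht
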